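/- For all γ₁, γ₂ > 0, the cross-entropy between the scale Cauchy densities p_{γ₁} and p_{γ₂} is h×(p_{γ₁} : p_{γ₂}) = −∫_ℝ p_{γ₁}(x) log p_{γ₂}(x) dx = log( π(γ₁ + γ₂)²/γ₂ ); in particular, the differential entropy of p_γ is h(p_γ) = h×(p_γ : p_γ) = log(4πγ). -/

import Mathlib

open MeasureTheory Real

/-- The scale Cauchy density with scale `γ > 0`. -/
noncomputable def cauchyScale (γ : ℝ) (x : ℝ) : ℝ := γ / (Real.pi * (γ ^ 2 + x ^ 2))

open Filter Set Topology Metric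



lemma tendsto_div_one_add_sq_atTop :
    Tendsto (fun x : ℝ => x / (2 * (1 + x^2))) atTop (𝓝 0) := by
  have h : Tendsto (fun x : ℝ => 2 * (x⁻¹ + x)) atTop atTop := by
    apply Tendsto.const_mul_atTop two_pos
    apply tendsto_atTop_mono' _ _ tendsto_id
    filter_upwards [eventually_gt_atTop (0:ℝ)] with x hx
    have : 0 < x⁻¹ := by positivity
    simp only [id]; linarith
  refine h.inv_tendsto_atTop.congr' ?_
  filter_upwards [eventually_gt_atTop (0:ℝ)] with x hx
  simp only [Pi.inv_apply]
  rw [eq_div_iff (by positivity), inv_mul_eq_div, div_eq_iff (by positivity)]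
  field_simp

lemma tendsto_div_one_add_sq_atBot :
    Tendsto (fun x : ℝ => x / (2 * (1 + x^2))) atBot (𝓝 0) := by
  have h := (tendsto_div_one_add_sq_atTop.comp tendsto_neg_atBot_atTop).neg
  rw [neg_zero] at h
  refine h.congr fun x => ?_
  simp only [Function.comp]
  field_simp

lemma integrable_inv_one_add_sq_sq :
    Integrable fun x : ℝ => ((1 + x^2)^2)⁻¹ := by
  refine integrable_inv_one_add_sq.mono ?_ ?_
  · exact (Continuous.inv₀ (by continuity) (fun x => by positivity)).aestronglyMeasurable
  · filter_upwards with x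
    have h1 : (1:ℝ) + x^2 ≤ (1 + x^2)^2 := by nlinarith [sq_nonneg x]
    rw [Real.norm_eq_abs, Real.norm_eq_abs, abs_of_pos (by positivity), abs_of_pos (by positivity)]
    exact inv_anti₀ (by positivity) h1

lemma integral_inv_one_add_sq_sq :
    ∫ x : ℝ, ((1 + x^2)^2)⁻¹ = π / 2 := by
  have hderiv : ∀ x : ℝ, HasDerivAt (fun y : ℝ => arctan y / 2 + y / (2 * (1 + y^2)))
      (((1 + x^2)^2)⁻¹) x := by
    intro x
    have h1 : HasDerivAt (fun y : ℝ => arctan y / 2) (1 / (1 + x^2) / 2) x :=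
      (Real.hasDerivAt_arctan x).div_const 2
    have hb : HasDerivAt (fun y : ℝ => 2 * (1 + y^2)) (2 * (2*x)) x := by
      have : HasDerivAt (fun y : ℝ => 1 + y^2) (2*x) x := by
        simpa using ((hasDerivAt_pow 2 x).const_add 1)
      simpa using this.const_mul 2
    have h2 := (hasDerivAt_id x).div hb (by positivity : (0:ℝ) < 2 * (1 + x^2)).ne'
    have h3 := h1.add h2
    refine h3.congr_deriv ?_
    have hx : (1:ℝ) + x^2 ≠ 0 := by positivity
    simp only [id]
    field_simp
    ring
  have hbot : Tendsto (fun y : ℝ => arctan y / 2 + y / (2 * (1 + y^2))) atBot (𝓝 (-(π/2)/2 + 0)) :=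
    ((tendsto_nhds_of_tendsto_nhdsWithin Real.tendsto_arctan_atBot).div_const 2).add
      tendsto_div_one_add_sq_atBot
  have htop : Tendsto (fun y : ℝ => arctan y / 2 + y / (2 * (1 + y^2))) atTop (𝓝 (π/2/2 + 0)) :=
    ((tendsto_nhds_of_tendsto_nhdsWithin Real.tendsto_arctan_atTop).div_const 2).add
      tendsto_div_one_add_sq_atTop
  have := MeasureTheory.integral_of_hasDerivAt_of_tendsto hderiv integrable_inv_one_add_sq_sq
    hbot htop
  rw [this]; ring

lemma integrable_inv_sq_add {a : ℝ} (ha : 0 < a) :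
    Integrable fun x : ℝ => (a^2 + x^2)⁻¹ := by
  have h := (integrable_inv_one_add_sq.comp_div (ne_of_gt ha)).const_mul (a^2)⁻¹
  have he : (fun x : ℝ => (a^2)⁻¹ * (1 + (x/a)^2)⁻¹) = fun x : ℝ => (a^2 + x^2)⁻¹ := by
    funext x
    rw [← mul_inv]
    congr 1
    field_simp
  rwa [he] at h

lemma integral_inv_sq_add {a : ℝ} (ha : 0 < a) :
    ∫ x : ℝ, (a^2 + x^2)⁻¹ = π / a := by
  have he : (fun x : ℝ => (a^2 + x^2)⁻¹) = fun x : ℝ => (a^2)⁻¹ * (1 + (x/a)^2)⁻¹ := by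
    funext x
    rw [← mul_inv]
    congr 1
    field_simp
  rw [he, integral_const_mul, Measure.integral_comp_div (fun y : ℝ => (1 + y^2)⁻¹) a,
    integral_univ_inv_one_add_sq, abs_of_pos ha, smul_eq_mul]
  field_simp

lemma cont_inv_sq_add {a : ℝ} (ha : 0 < a) :
    Continuous fun x : ℝ => (a^2 + x^2)⁻¹ :=
  Continuous.inv₀ (by continuity) (fun x => by positivity)

lemma integrable_prod_inv {a b : ℝ} (ha : 0 < a) (hb : 0 < b) :
    Integrable fun x : ℝ => (a^2 + x^2)⁻¹ * (b^2 + x^2)⁻¹ := by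
  refine ((integrable_inv_sq_add ha).const_mul ((b^2)⁻¹)).mono' ?_ ?_
  · exact ((cont_inv_sq_add ha).mul (cont_inv_sq_add hb)).aestronglyMeasurable
  · filter_upwards with x
    rw [Real.norm_eq_abs, abs_of_pos (by positivity), mul_comm ((b^2)⁻¹)]
    have : (b^2 + x^2)⁻¹ ≤ (b^2)⁻¹ := by
      apply inv_anti₀ (by positivity); nlinarith [sq_nonneg x]
    apply mul_le_mul_of_nonneg_left this (by positivity)

lemma integral_prod_inv {a b : ℝ} (ha : 0 < a) (hb : 0 < b) :
    ∫ x : ℝ, (a^2 + x^2)⁻¹ * (b^2 + x^2)⁻¹ = π / (a * b * (a + b)) := by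
  rcases eq_or_ne b a with heq | hne
  · subst heq
    have he : (fun x : ℝ => (b^2 + x^2)⁻¹ * (b^2 + x^2)⁻¹)
        = fun x : ℝ => (b^4)⁻¹ * ((1 + (x/b)^2)^2)⁻¹ := by
      funext x
      rw [← mul_inv, ← mul_inv]
      congr 1
      field_simp
    rw [he, integral_const_mul, Measure.integral_comp_div (fun y : ℝ => ((1 + y^2)^2)⁻¹) b,
      integral_inv_one_add_sq_sq, abs_of_pos hb, smul_eq_mul]
    field_simp
    ring
  · have hsq : b^2 - a^2 ≠ 0 := by
      intro h
      apply hne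
      nlinarith [ha.le, hb.le]
    have he : ∀ x : ℝ, (a^2 + x^2)⁻¹ * (b^2 + x^2)⁻¹
        = (b^2 - a^2)⁻¹ * (a^2 + x^2)⁻¹ - (b^2 - a^2)⁻¹ * (b^2 + x^2)⁻¹ := by
      intro x
      have h1 : a^2 + x^2 ≠ 0 := by positivity
      have h2 : b^2 + x^2 ≠ 0 := by positivity
      field_simp
      ring
    rw [show (fun x : ℝ => (a^2 + x^2)⁻¹ * (b^2 + x^2)⁻¹)
        = fun x : ℝ => (b^2 - a^2)⁻¹ * (a^2 + x^2)⁻¹ - (b^2 - a^2)⁻¹ * (b^2 + x^2)⁻¹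
        from funext he]
    rw [integral_sub (((integrable_inv_sq_add ha).const_mul _))
      (((integrable_inv_sq_add hb).const_mul _)), integral_const_mul, integral_const_mul,
      integral_inv_sq_add ha, integral_inv_sq_add hb]
    have hab : a + b ≠ 0 := by positivity
    field_simp
    ring

lemma cont_inv_mul_log {a t : ℝ} (ha : 0 < a) (ht : 0 < t) :
    Continuous fun x : ℝ => (a^2 + x^2)⁻¹ * Real.log (t^2 + x^2) :=
  (cont_inv_sq_add ha).mul (Continuous.log (by continuity) (fun x => by positivity))

lemma log_le_four_rpow {x : ℝ} (hx : 1 ≤ x) : Real.log x ≤ 2 * x ^ ((1:ℝ)/2) := by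
  have hx0 : 0 < x := lt_of_lt_of_le one_pos hx
  have h1 : Real.log x = 2 * Real.log (Real.sqrt x) := by
    rw [Real.log_sqrt hx0.le]; ring
  have h2 : Real.log (Real.sqrt x) ≤ Real.sqrt x - 1 :=
    Real.log_le_sub_one_of_pos (Real.sqrt_pos.2 hx0)
  have h3 : Real.sqrt x = x ^ ((1:ℝ)/2) := by rw [Real.sqrt_eq_rpow]
  nlinarith [Real.sqrt_nonneg x]

lemma integrable_inv_mul_log {a t : ℝ} (ha : 0 < a) (ht : 0 < t) :
    Integrable fun x : ℝ => (a^2 + x^2)⁻¹ * Real.log (t^2 + x^2) := by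
  set f : ℝ → ℝ := fun x => (a^2 + x^2)⁻¹ * Real.log (t^2 + x^2) with hf
  set M : ℝ := max 1 t with hMdef
  have hM1 : (1:ℝ) ≤ M := le_max_left _ _
  have hMt : t ≤ M := le_max_right _ _
  have hM0 : (0:ℝ) < M := lt_of_lt_of_le one_pos hM1
  have hcont : Continuous f := cont_inv_mul_log ha ht
  -- tail estimate on Ioi M
  have htail : ∀ x : ℝ, M ≤ x → ‖f x‖ ≤ Real.log 2 * x ^ (-(2:ℝ)) + 4 * x ^ (-(3:ℝ)/2) := by
    intro x hx
    have hx1 : (1:ℝ) ≤ x := le_trans hM1 hx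
    have hx0 : (0:ℝ) < x := lt_of_lt_of_le one_pos hx1
    have hlog0 : 0 ≤ Real.log (t^2 + x^2) := by
      apply Real.log_nonneg; nlinarith
    have hfx0 : 0 ≤ f x := by
      apply mul_nonneg (by positivity) hlog0
    rw [Real.norm_eq_abs, abs_of_nonneg hfx0]
    have h1 : (a^2 + x^2)⁻¹ ≤ (x^2)⁻¹ := by
      apply inv_anti₀ (by positivity); nlinarith [sq_nonneg a]
    have h2 : Real.log (t^2 + x^2) ≤ Real.log 2 + 2 * Real.log x := by
      have : Real.log (t^2 + x^2) ≤ Real.log (2 * x^2) := by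
        apply Real.log_le_log (by positivity)
        nlinarith [le_trans hMt hx]
      rw [Real.log_mul two_ne_zero (by positivity), Real.log_pow] at this
      simpa using this
    have h3 : Real.log x ≤ 2 * x ^ ((1:ℝ)/2) := log_le_four_rpow hx1
    have key : f x ≤ (x^2)⁻¹ * (Real.log 2 + 4 * x ^ ((1:ℝ)/2)) := by
      apply mul_le_mul h1 (by linarith) hlog0 (by positivity)
    refine key.trans ?_
    have e1 : (x^2)⁻¹ = x ^ (-(2:ℝ)) := by
      rw [Real.rpow_neg hx0.le, Real.rpow_two]
    have e2 : x ^ (-(2:ℝ)) * x ^ ((1:ℝ)/2) = x ^ (-(3:ℝ)/2) := by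
      rw [← Real.rpow_add hx0]
      norm_num
    rw [mul_add, e1, mul_comm (x ^ (-(2:ℝ))) (Real.log 2),
      show x ^ (-(2:ℝ)) * (4 * x ^ ((1:ℝ)/2)) = 4 * (x ^ (-(2:ℝ)) * x ^ ((1:ℝ)/2)) by ring, e2]
  have hbound_int : IntegrableOn (fun x : ℝ => Real.log 2 * x ^ (-(2:ℝ)) + 4 * x ^ (-(3:ℝ)/2)) (Ioi M) := by
    apply Integrable.add
    · exact ((integrableOn_Ioi_rpow_of_lt (by norm_num) hM0).const_mul _)
    · exact ((integrableOn_Ioi_rpow_of_lt (by norm_num) hM0).const_mul _)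
  have hIoi : IntegrableOn f (Ioi M) := by
    refine hbound_int.mono' hcont.aestronglyMeasurable.restrict ?_
    filter_upwards [ae_restrict_mem measurableSet_Ioi] with x hx
    exact htail x (le_of_lt hx)
  have heven : ∀ x : ℝ, f (-x) = f x := by
    intro x; simp only [hf, neg_sq]
  have hIio : IntegrableOn f (Iio (-M)) := by
    have h1 : Integrable (Set.indicator (Ioi M) f) :=
      (integrable_indicator_iff measurableSet_Ioi).2 hIoi
    have h2 := h1.comp_neg
    have h3 : (fun x => Set.indicator (Ioi M) f (-x)) = Set.indicator (Iio (-M)) f := by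
      funext x
      by_cases hx : x < -M
      · rw [Set.indicator_of_mem (by simp only [mem_Ioi]; linarith) f,
          Set.indicator_of_mem (by exact hx) f, heven]
      · rw [Set.indicator_of_notMem (by simp only [mem_Ioi]; push_neg at hx ⊢; linarith) f,
          Set.indicator_of_notMem (by exact hx) f]
    rw [h3] at h2
    exact (integrable_indicator_iff measurableSet_Iio).1 h2
  have hIcc : IntegrableOn f (Icc (-M) M) := hcont.integrableOn_Icc
  have huniv : (univ : Set ℝ) = Iio (-M) ∪ (Icc (-M) M ∪ Ioi M) := by
    ext x
    simp only [mem_univ, true_iff, mem_union, mem_Iio, mem_Icc, mem_Ioi]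
    rcases lt_or_ge x (-M) with h | h
    · exact Or.inl h
    · rcases le_or_gt x M with h2 | h2
      · exact Or.inr (Or.inl ⟨h, h2⟩)
      · exact Or.inr (Or.inr h2)
  rw [← integrableOn_univ, huniv]
  exact hIio.union (hIcc.union hIoi)

noncomputable def G (a t : ℝ) : ℝ := ∫ x : ℝ, (a^2 + x^2)⁻¹ * Real.log (t^2 + x^2)

lemma hasDerivAt_G {a t : ℝ} (ha : 0 < a) (ht : 0 < t) :
    HasDerivAt (G a) (2 * π / (a * (a + t))) t := by
  have hεpos : (0:ℝ) < t/2 := by linarith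
  have key := hasDerivAt_integral_of_dominated_loc_of_deriv_le (μ := volume)
    (F := fun s x => (a^2 + x^2)⁻¹ * Real.log (s^2 + x^2))
    (F' := fun s x => (a^2 + x^2)⁻¹ * (2 * s / (s^2 + x^2)))
    (x₀ := t)
    (bound := fun x => (a^2 + x^2)⁻¹ * (4 / t)) (ball_mem_nhds t hεpos) ?meas ?int ?meas' ?bnd ?bint ?diff
  case meas =>
    filter_upwards [eventually_gt_nhds ht] with s hs
    exact (cont_inv_mul_log ha hs).aestronglyMeasurable
  case int => exact integrable_inv_mul_log ha ht
  case meas' =>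
    apply Continuous.aestronglyMeasurable
    exact (cont_inv_sq_add ha).mul (Continuous.div (by continuity) (by continuity)
      (fun x => by positivity))
  case bnd =>
    filter_upwards with x
    intro s hs
    rw [mem_ball, Real.dist_eq, abs_lt] at hs
    have hs0 : t/2 < s := by linarith [hs.1]
    have hspos : 0 < s := by linarith
    rw [Real.norm_eq_abs, abs_of_nonneg (by positivity)]
    apply mul_le_mul_of_nonneg_left _ (by positivity)
    rw [div_le_div_iff₀ (by positivity) ht]
    nlinarith [sq_nonneg x, sq_nonneg (s - t)]
  case bint => exact (integrable_inv_sq_add ha).mul_const _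
  case diff =>
    filter_upwards with x
    intro s hs
    rw [mem_ball, Real.dist_eq, abs_lt] at hs
    have hspos : 0 < s := by linarith [hs.1]
    have h1 : HasDerivAt (fun s : ℝ => s^2 + x^2) (2*s) s := by
      simpa using (hasDerivAt_pow 2 s).add_const (x^2)
    have h2 := (h1.log (by positivity)).const_mul ((a^2 + x^2)⁻¹)
    simpa [mul_comm, mul_div_assoc] using h2
  have hD := key.2
  have : (∫ x : ℝ, (a^2 + x^2)⁻¹ * (2 * t / (t^2 + x^2))) = 2 * π / (a * (a + t)) := by
    have e : (fun x : ℝ => (a^2 + x^2)⁻¹ * (2 * t / (t^2 + x^2)))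
        = fun x : ℝ => (2*t) * ((a^2 + x^2)⁻¹ * (t^2 + x^2)⁻¹) := by
      funext x; field_simp
    rw [e, integral_const_mul, integral_prod_inv ha ht]
    field_simp
  rw [this] at hD
  exact hD

lemma d_hasDeriv {a : ℝ} (ha : 0 < a) {t : ℝ} (ht : t ∈ Ioi (0:ℝ)) :
    HasDerivAt (fun t => G a t - (2*π/a) * Real.log (a + t)) 0 t := by
  rw [mem_Ioi] at ht
  have h1 := hasDerivAt_G ha ht
  have h2 : HasDerivAt (fun t : ℝ => (2*π/a) * Real.log (a + t))
      ((2*π/a) * ((1:ℝ)/(a+t))) t := by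
    have hb : HasDerivAt (fun t : ℝ => a + t) 1 t := by
      simpa using (hasDerivAt_id t).const_add a
    have := (hb.log (by positivity)).const_mul (2*π/a)
    simpa using this
  have h3 := h1.sub h2
  refine h3.congr_deriv ?_
  field_simp
  ring

lemma d_const {a : ℝ} (ha : 0 < a) {s t : ℝ} (hs : s ∈ Ioi (0:ℝ)) (ht : t ∈ Ioi (0:ℝ)) :
    G a s - (2*π/a) * Real.log (a + s) = G a t - (2*π/a) * Real.log (a + t) := by
  apply Convex.is_const_of_fderivWithin_eq_zero (𝕜 := ℝ) (convex_Ioi (0:ℝ))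
    (f := fun t => G a t - (2*π/a) * Real.log (a + t)) ?_ ?_ hs ht
  · intro x hx
    exact (d_hasDeriv ha hx).differentiableAt.differentiableWithinAt
  · intro x hx
    rw [fderivWithin_of_isOpen isOpen_Ioi hx,
      (d_hasDeriv ha hx).hasFDerivAt.fderiv]
    ext y
    simp

lemma G_sub_log {a t : ℝ} (ha : 0 < a) (ht : 0 < t) :
    G a t - (2*π/a) * Real.log t
      = ∫ x : ℝ, (a^2 + x^2)⁻¹ * Real.log (1 + (x/t)^2) := by
  have hint1 := integrable_inv_mul_log ha ht
  have hint2 := (integrable_inv_sq_add ha).mul_const (2 * Real.log t)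
  rw [show (2*π/a) * Real.log t = (π/a) * (2 * Real.log t) by ring,
    ← integral_inv_sq_add ha, ← integral_mul_const, G, ← integral_sub hint1 hint2]
  apply integral_congr_ae
  filter_upwards with x
  have e1 : Real.log (t^2 + x^2) - 2 * Real.log t = Real.log (1 + (x/t)^2) := by
    rw [show (2:ℝ) * Real.log t = Real.log (t^2) by rw [Real.log_pow]; push_cast; ring,
      ← Real.log_div (by positivity) (by positivity)]
    congr 1
    field_simp
  rw [← e1]
  ring

lemma tendsto_J {a : ℝ} (ha : 0 < a) :
    Tendsto (fun t : ℝ => ∫ x : ℝ, (a^2 + x^2)⁻¹ * Real.log (1 + (x/t)^2)) atTop (𝓝 0) := by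
  have h0 : (0:ℝ) = ∫ x : ℝ, (0:ℝ) := by simp
  rw [h0]
  apply tendsto_integral_filter_of_dominated_convergence
    (bound := fun x : ℝ => (a^2 + x^2)⁻¹ * Real.log (1 + x^2))
  · filter_upwards [eventually_gt_atTop (0:ℝ)] with t htpos
    apply Continuous.aestronglyMeasurable
    apply (cont_inv_sq_add ha).mul
    exact Continuous.log (continuous_const.add ((continuous_id.div_const t).pow 2))
      (fun x => by positivity)
  · filter_upwards [eventually_ge_atTop (1:ℝ)] with t ht1
    filter_upwards with x
    have ht0 : (0:ℝ) < t := lt_of_lt_of_le one_pos ht1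
    have hlog0 : 0 ≤ Real.log (1 + (x/t)^2) := Real.log_nonneg (by nlinarith [sq_nonneg (x/t)])
    rw [Real.norm_eq_abs, abs_of_nonneg (mul_nonneg (by positivity) hlog0)]
    apply mul_le_mul_of_nonneg_left _ (by positivity)
    apply Real.log_le_log (by positivity)
    have : (x/t)^2 ≤ x^2 := by
      rw [div_pow]
      rw [div_le_iff₀ (by positivity)]
      have h1t : 1 ≤ t^2 := by nlinarith
      nlinarith [sq_nonneg x]
    linarith
  · have e : (fun x : ℝ => (a^2 + x^2)⁻¹ * Real.log (1 + x^2))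
        = fun x : ℝ => (a^2 + x^2)⁻¹ * Real.log (1^2 + x^2) := by norm_num
    rw [e]
    exact integrable_inv_mul_log ha one_pos
  · filter_upwards with x
    have h1 : Tendsto (fun t : ℝ => 1 + (x/t)^2) atTop (𝓝 1) := by
      have : Tendsto (fun t : ℝ => x/t) atTop (𝓝 0) := tendsto_const_nhds.div_atTop tendsto_id
      have := (this.pow 2).const_add 1
      simpa using this
    have h2 := ((Real.continuousAt_log one_ne_zero).tendsto.comp h1)
    rw [Real.log_one] at h2
    simpa using (tendsto_const_nhds (x := (a^2 + x^2)⁻¹)).mul h2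

lemma G_eq {a t : ℝ} (ha : 0 < a) (ht : 0 < t) :
    G a t = (2*π/a) * Real.log (a + t) := by
  set d : ℝ → ℝ := fun t => G a t - (2*π/a) * Real.log (a + t) with hd
  have hconst : ∀ s ∈ Ioi (0:ℝ), d s = d 1 := fun s hs => d_const ha hs (by norm_num)
  -- d tends to 0 at top
  have hlog : Tendsto (fun t : ℝ => Real.log (a + t) - Real.log t) atTop (𝓝 0) := by
    have h1 : Tendsto (fun t : ℝ => (a + t)/t) atTop (𝓝 1) := by
      have : Tendsto (fun t : ℝ => a/t + 1) atTop (𝓝 (0 + 1)) :=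
        (tendsto_const_nhds.div_atTop tendsto_id).add tendsto_const_nhds
      rw [zero_add] at this
      refine this.congr' ?_
      filter_upwards [eventually_gt_atTop (0:ℝ)] with t htpos
      field_simp
    have h2 := (Real.continuousAt_log one_ne_zero).tendsto.comp h1
    rw [Real.log_one] at h2
    refine h2.congr' ?_
    filter_upwards [eventually_gt_atTop (0:ℝ)] with t htpos
    rw [Function.comp_apply, Real.log_div (by positivity) (by positivity)]
  have hdlim : Tendsto d atTop (𝓝 0) := by
    have h1 := (tendsto_J ha).sub (hlog.const_mul (2*π/a))
    rw [mul_zero, sub_zero] at h1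
    refine h1.congr' ?_
    filter_upwards [eventually_gt_atTop (0:ℝ)] with t htpos
    rw [← G_sub_log ha htpos, hd]
    ring
  have hconst_lim : Tendsto d atTop (𝓝 (d 1)) := by
    refine tendsto_const_nhds.congr' ?_
    filter_upwards [eventually_gt_atTop (0:ℝ)] with t htpos
    exact (hconst t htpos).symm
  have hzero : d 1 = 0 := tendsto_nhds_unique hconst_lim hdlim
  have := hconst t ht
  rw [hzero] at this
  have : d t = 0 := this
  rw [hd] at this
  linarith [this]


theorem cross_key {γ₁ γ₂ : ℝ} (h₁ : 0 < γ₁) (h₂ : 0 < γ₂) :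
    -∫ x, cauchyScale γ₁ x * Real.log (cauchyScale γ₂ x)
      = Real.log (Real.pi * (γ₁ + γ₂) ^ 2 / γ₂) := by
  have hππ : (0:ℝ) < π := pi_pos
  have hfun : (fun x : ℝ => cauchyScale γ₁ x * Real.log (cauchyScale γ₂ x))
      = fun x : ℝ => (γ₁/π * (Real.log γ₂ - Real.log π)) * (γ₁^2+x^2)⁻¹
          - (γ₁/π) * ((γ₁^2+x^2)⁻¹ * Real.log (γ₂^2+x^2)) := by
    funext x
    unfold cauchyScale
    rw [Real.log_div (ne_of_gt h₂) (by positivity), Real.log_mul (ne_of_gt hππ) (by positivity)]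
    have e : γ₁ / (π * (γ₁^2+x^2)) = γ₁/π * (γ₁^2+x^2)⁻¹ := by
      field_simp
    rw [e]
    ring
  have hG : (∫ x : ℝ, (γ₁^2+x^2)⁻¹ * Real.log (γ₂^2+x^2)) = (2*π/γ₁) * Real.log (γ₁+γ₂) :=
    G_eq h₁ h₂
  rw [hfun, integral_sub ((integrable_inv_sq_add h₁).const_mul _)
      ((integrable_inv_mul_log h₁ h₂).const_mul _),
    integral_const_mul, integral_const_mul, integral_inv_sq_add h₁, hG,
    Real.log_div (by positivity) (ne_of_gt h₂), Real.log_mul (ne_of_gt hππ) (by positivity),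
    Real.log_pow]
  have hγ₁ : γ₁ ≠ 0 := ne_of_gt h₁
  have hπ : π ≠ 0 := ne_of_gt hππ
  field_simp
  ring


/-- The cross-entropy between scale Cauchy densities is
`h×(p_{γ₁} : p_{γ₂}) = log(π(γ₁+γ₂)²/γ₂)`; in particular the differential entropy of
`p_γ` is `log(4πγ)`. -/
theorem cross_entropy_scale_cauchy
    (γ₁ γ₂ : ℝ) (h₁ : 0 < γ₁) (h₂ : 0 < γ₂) :
    (-∫ x, cauchyScale γ₁ x * Real.log (cauchyScale γ₂ x)
      = Real.log (Real.pi * (γ₁ + γ₂) ^ 2 / γ₂)) ∧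
    (-∫ x, cauchyScale γ₁ x * Real.log (cauchyScale γ₁ x)
      = Real.log (4 * Real.pi * γ₁)) := by
  
  refine ⟨cross_key h₁ h₂, ?_⟩
  rw [cross_key h₁ h₁]
  congr 1
  field_simp
  ring
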